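/- Fix integers n ≥ 4 and 1 ≤ k ≤ n−1. If E : ℤ² × {0,1} → ℝ satisfies the pentagram square relation and is (n,k)-periodic, then the monomial Z is independent of the base point: Z(p) = Z(q) for all p, q ∈ ℤ². (Invariance of the first invariant Z(n,k) under all allowable translations.) -/

import Mathlib

/-!
Invariance of the first invariant `Z(n,k)` under all allowable translations:
for an `(n,k)`-periodic labeling satisfying the pentagram square relation,
the monomial `Z` is independent of the base point.
-/

/-- The pentagram square relation for an edge labeling `E`. -/
def PentagramRel (E : ℤ × ℤ → Fin 2 → ℝ) : Prop :=
  ∀ p : ℤ × ℤ, E p 0 * E (p + (1, 0)) 1 = E p 1 * E (p + (0, 1)) 0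

/-- `(n,k)`-periodicity of a labeling: invariance under translation by `(n+k, n)`. -/
def PeriodicNK (n k : ℕ) (E : ℤ × ℤ → Fin 2 → ℝ) : Prop :=
  ∀ (p : ℤ × ℤ) (ε : Fin 2), E (p + ((n : ℤ) + (k : ℤ), (n : ℤ))) ε = E p ε

/-- The monomial `Z(p)`: the product of the labels along the monotone lattice path
from `p` to `p + (n+k, n)` consisting of all `+(1,0)` steps followed by all
`+(0,1)` steps. -/
def Zinv (n k : ℕ) (E : ℤ × ℤ → Fin 2 → ℝ) (p : ℤ × ℤ) : ℝ :=
  (∏ i ∈ Finset.range (n + k), E (p + ((i : ℤ), 0)) 0) *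
    (∏ j ∈ Finset.range n, E (p + ((n : ℤ) + (k : ℤ), (j : ℤ))) 1)

namespace ZinvAux

open Finset

variable (E : ℤ × ℤ → Fin 2 → ℝ)

/-- horizontal run -/
def R (a : ℤ × ℤ) (m : ℕ) : ℝ := ∏ i ∈ range m, E (a + ((i : ℤ), 0)) 0

/-- vertical run -/
def U (a : ℤ × ℤ) (r : ℕ) : ℝ := ∏ j ∈ range r, E (a + (0, (j : ℤ))) 1

lemma pt (a : ℤ × ℤ) (x y x' y' : ℤ) (hx : x = x') (hy : y = y') :
    a + (x, y) = a + (x', y') := by rw [hx, hy]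

lemma R_succ (a : ℤ × ℤ) (m : ℕ) :
    R E a (m + 1) = R E a m * E (a + ((m : ℤ), 0)) 0 := by
  simp [R, Finset.prod_range_succ]

lemma R_succ' (a : ℤ × ℤ) (m : ℕ) :
    R E a (m + 1) = E a 0 * R E (a + (1, 0)) m := by
  rw [R, Finset.prod_range_succ']
  rw [mul_comm]
  congr 1
  · simp [Prod.mk_zero_zero]
  · refine Finset.prod_congr rfl fun i _ => ?_
    congr 1
    rw [add_assoc]
    exact pt a _ _ _ _ (by push_cast; ring) (by ring)

lemma U_succ (a : ℤ × ℤ) (r : ℕ) :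
    U E a (r + 1) = U E a r * E (a + (0, (r : ℤ))) 1 := by
  simp [U, Finset.prod_range_succ]

lemma U_succ' (a : ℤ × ℤ) (r : ℕ) :
    U E a (r + 1) = E a 1 * U E (a + (0, 1)) r := by
  rw [U, Finset.prod_range_succ']
  rw [mul_comm]
  congr 1
  · simp [Prod.mk_zero_zero]
  · refine Finset.prod_congr rfl fun i _ => ?_
    congr 1
    rw [add_assoc]
    exact pt a _ _ _ _ (by ring) (by push_cast; ring)

lemma colswap (hE : PentagramRel E) (r : ℕ) :
    ∀ a : ℤ × ℤ, E a 0 * U E (a + (1, 0)) r = U E a r * E (a + (0, (r : ℤ))) 0 := by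
  induction r with
  | zero => intro a; simp [U, Prod.mk_zero_zero]
  | succ r ih =>
    intro a
    rw [U_succ' E (a + (1,0)) r]
    have h1 : a + (1, 0) + (0, 1) = a + (0, 1) + (1, 0) := by
      rw [add_assoc, add_assoc]; exact pt a _ _ _ _ (by ring) (by ring)
    calc E a 0 * (E (a + (1, 0)) 1 * U E (a + (1, 0) + (0, 1)) r)
        = (E a 0 * E (a + (1, 0)) 1) * U E (a + (0, 1) + (1, 0)) r := by rw [h1]; ring
      _ = E a 1 * (E (a + (0, 1)) 0 * U E (a + (0, 1) + (1, 0)) r) := by rw [hE a]; ring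
      _ = E a 1 * (U E (a + (0, 1)) r * E (a + (0, 1) + (0, (r : ℤ))) 0) := by rw [ih]
      _ = (E a 1 * U E (a + (0, 1)) r) * E (a + (0, ((r : ℕ) + 1 : ℤ))) 0 := by
            rw [add_assoc]
            rw [show ((0:ℤ), (1:ℤ)) + (0, (r:ℤ)) = ((0:ℤ), ((r:ℕ) + 1 : ℤ)) by
              simp [Prod.ext_iff]; ring]
            ring
      _ = U E a (r + 1) * E (a + (0, ((r + 1 : ℕ) : ℤ))) 0 := by
            rw [U_succ' E a r]; push_cast; ring_nf

lemma rowswap (hE : PentagramRel E) (m : ℕ) :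
    ∀ a : ℤ × ℤ, E a 1 * R E (a + (0, 1)) m = R E a m * E (a + ((m : ℤ), 0)) 1 := by
  induction m with
  | zero => intro a; simp [R, Prod.mk_zero_zero]
  | succ m ih =>
    intro a
    rw [R_succ' E (a + (0,1)) m]
    have h1 : a + (0, 1) + (1, 0) = a + (1, 0) + (0, 1) := by
      rw [add_assoc, add_assoc]; exact pt a _ _ _ _ (by ring) (by ring)
    calc E a 1 * (E (a + (0, 1)) 0 * R E (a + (0, 1) + (1, 0)) m)
        = (E a 1 * E (a + (0, 1)) 0) * R E (a + (1, 0) + (0, 1)) m := by rw [h1]; ring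
      _ = E a 0 * (E (a + (1, 0)) 1 * R E (a + (1, 0) + (0, 1)) m) := by rw [← hE a]; ring
      _ = E a 0 * (R E (a + (1, 0)) m * E (a + (1, 0) + ((m : ℤ), 0)) 1) := by rw [ih]
      _ = (E a 0 * R E (a + (1, 0)) m) * E (a + (((m : ℕ) + 1 : ℤ), 0)) 1 := by
            rw [add_assoc]
            rw [show ((1:ℤ), (0:ℤ)) + ((m:ℤ), 0) = (((m:ℕ) + 1 : ℤ), (0:ℤ)) by
              simp [Prod.ext_iff]; ring]
            ring
      _ = R E a (m + 1) * E (a + (((m + 1 : ℕ) : ℤ), 0)) 1 := by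
            rw [R_succ' E a m]; push_cast; ring_nf

lemma rect (hE : PentagramRel E) (m r : ℕ) :
    ∀ a : ℤ × ℤ, R E a m * U E (a + ((m : ℤ), 0)) r
      = U E a r * R E (a + (0, (r : ℤ))) m := by
  induction m with
  | zero => intro a; simp [R, Prod.mk_zero_zero]
  | succ m ih =>
    intro a
    calc R E a (m + 1) * U E (a + (((m + 1 : ℕ) : ℤ), 0)) r
        = R E a m * (E (a + ((m:ℤ), 0)) 0 * U E (a + ((m:ℤ), 0) + (1, 0)) r) := by
          rw [R_succ]
          rw [show a + (((m + 1 : ℕ) : ℤ), 0) = a + ((m:ℤ), 0) + (1, 0) by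
            rw [add_assoc]; exact pt a _ _ _ _ (by push_cast; ring) (by ring)]
          ring
      _ = R E a m * (U E (a + ((m:ℤ), 0)) r * E (a + ((m:ℤ), 0) + (0, (r:ℤ))) 0) := by
          rw [colswap E hE]
      _ = (R E a m * U E (a + ((m:ℤ), 0)) r) * E (a + (0, (r:ℤ)) + ((m:ℤ), 0)) 0 := by
          rw [add_assoc, add_assoc]
          rw [show ((m:ℤ), (0:ℤ)) + (0, (r:ℤ)) = ((0:ℤ), (r:ℤ)) + ((m:ℤ), 0) by
            simp [Prod.ext_iff]]
          ring
      _ = U E a r * R E (a + (0, (r:ℤ))) (m + 1) := by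
          rw [ih, R_succ]; ring

end ZinvAux

namespace ZinvAux

open Finset

lemma Zinv_eq (n k : ℕ) (E : ℤ × ℤ → Fin 2 → ℝ) (p : ℤ × ℤ) :
    Zinv n k E p = R E p (n + k) * U E (p + ((n : ℤ) + (k : ℤ), 0)) n := by
  unfold Zinv R U
  congr 1
  refine Finset.prod_congr rfl fun j _ => ?_
  congr 1
  rw [add_assoc]
  exact pt p _ _ _ _ (by ring) (by ring)

lemma Zalt (n k : ℕ) (E : ℤ × ℤ → Fin 2 → ℝ) (hE : PentagramRel E) (p : ℤ × ℤ) :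
    Zinv n k E p = U E p n * R E (p + (0, (n : ℤ))) (n + k) := by
  have hr := rect E hE (n + k) n p
  rw [show p + (((n + k : ℕ) : ℤ), 0) = p + ((n : ℤ) + (k : ℤ), 0) from
    pt p _ _ _ _ (by push_cast; ring) rfl] at hr
  rw [Zinv_eq, hr]

variable {n k : ℕ} {E : ℤ × ℤ → Fin 2 → ℝ}

lemma step1 (hn : 1 ≤ n) (hE : PentagramRel E) (hper : PeriodicNK n k E) (p : ℤ × ℤ) :
    Zinv n k E (p + (1, 0)) = Zinv n k E p := by
  by_cases h : E p 0 = 0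
  · have hz1 : Zinv n k E p = 0 := by
      rw [Zinv_eq]
      have : R E p (n + k) = 0 := by
        apply Finset.prod_eq_zero (Finset.mem_range.mpr (by omega : 0 < n + k))
        simpa [Prod.mk_zero_zero] using h
      rw [this, zero_mul]
    have hz2 : Zinv n k E (p + (1, 0)) = 0 := by
      rw [Zalt n k E hE]
      have : R E (p + (1, 0) + (0, (n : ℤ))) (n + k) = 0 := by
        apply Finset.prod_eq_zero (Finset.mem_range.mpr (by omega : n + k - 1 < n + k))
        have hpt : p + (1, 0) + (0, (n : ℤ)) + (((n + k - 1 : ℕ) : ℤ), 0)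
            = p + ((n : ℤ) + (k : ℤ), (n : ℤ)) := by
          simp only [Prod.ext_iff, Prod.fst_add, Prod.snd_add] <;> constructor <;> omega
        rw [hpt, hper p 0, h]
      rw [this, mul_zero]
    rw [hz1, hz2]
  · apply mul_left_cancel₀ h
    have key : E p 0 * Zinv n k E (p + (1, 0)) = Zinv n k E p * E p 0 := by
      rw [Zinv_eq n k E (p + (1,0)), Zinv_eq n k E p]
      have h1 : E p 0 * R E (p + (1, 0)) (n + k) = R E p (n + k + 1) := (R_succ' E p (n+k)).symm
      have h2 : R E p (n + k + 1) = R E p (n + k) * E (p + (((n+k : ℕ) : ℤ), 0)) 0 :=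
        R_succ E p (n + k)
      have h3 : p + (1, 0) + ((n:ℤ) + (k:ℤ), 0) = p + (((n+k:ℕ):ℤ), 0) + (1, 0) := by
        rw [add_assoc, add_assoc]
        exact pt p _ _ _ _ (by push_cast; ring) (by ring)
      calc E p 0 * (R E (p + (1, 0)) (n + k) * U E (p + (1, 0) + ((n:ℤ) + (k:ℤ), 0)) n)
          = R E p (n + k + 1) * U E (p + (((n+k:ℕ):ℤ), 0) + (1, 0)) n := by
            rw [← h1, h3]; ring
        _ = R E p (n + k) * (E (p + (((n+k:ℕ):ℤ), 0)) 0 * U E (p + (((n+k:ℕ):ℤ), 0) + (1, 0)) n) := by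
            rw [h2]; ring
        _ = R E p (n + k) * (U E (p + (((n+k:ℕ):ℤ), 0)) n * E (p + (((n+k:ℕ):ℤ), 0) + (0, (n:ℤ))) 0) := by
            rw [colswap E hE]
        _ = (R E p (n + k) * U E (p + ((n:ℤ) + (k:ℤ), 0)) n) * E (p + ((n:ℤ) + (k:ℤ), (n:ℤ))) 0 := by
            rw [show p + (((n+k:ℕ):ℤ), 0) = p + ((n:ℤ) + (k:ℤ), 0) from
              pt p _ _ _ _ (by push_cast; ring) rfl]
            rw [add_assoc]
            rw [show ((n:ℤ) + (k:ℤ), (0:ℤ)) + (0, (n:ℤ)) = ((n:ℤ) + (k:ℤ), (n:ℤ)) by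
              simp [Prod.ext_iff]]
            ring
        _ = (R E p (n + k) * U E (p + ((n:ℤ) + (k:ℤ), 0)) n) * E p 0 := by
            rw [hper p 0]
    rw [key, mul_comm]

lemma step2 (hn : 1 ≤ n) (hE : PentagramRel E) (hper : PeriodicNK n k E) (p : ℤ × ℤ) :
    Zinv n k E (p + (0, 1)) = Zinv n k E p := by
  by_cases h : E p 1 = 0
  · have hz1 : Zinv n k E p = 0 := by
      rw [Zalt n k E hE]
      have : U E p n = 0 := by
        apply Finset.prod_eq_zero (Finset.mem_range.mpr (by omega : 0 < n))
        simpa [Prod.mk_zero_zero] using h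
      rw [this, zero_mul]
    have hz2 : Zinv n k E (p + (0, 1)) = 0 := by
      rw [Zinv_eq]
      have : U E (p + (0, 1) + ((n:ℤ) + (k:ℤ), 0)) n = 0 := by
        apply Finset.prod_eq_zero (Finset.mem_range.mpr (by omega : n - 1 < n))
        have hpt : p + (0, 1) + ((n:ℤ) + (k:ℤ), 0) + (0, ((n - 1 : ℕ) : ℤ))
            = p + ((n : ℤ) + (k : ℤ), (n : ℤ)) := by
          simp only [Prod.ext_iff, Prod.fst_add, Prod.snd_add] <;> constructor <;> omega
        rw [hpt, hper p 1, h]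
      rw [this, mul_zero]
    rw [hz1, hz2]
  · apply mul_left_cancel₀ h
    have key : E p 1 * Zinv n k E (p + (0, 1)) = Zinv n k E p * E p 1 := by
      rw [Zalt n k E hE (p + (0,1)), Zalt n k E hE p]
      have h1 : E p 1 * U E (p + (0, 1)) n = U E p (n + 1) := (U_succ' E p n).symm
      have h2 : U E p (n + 1) = U E p n * E (p + (0, (n : ℤ))) 1 := U_succ E p n
      have h3 : p + (0, 1) + (0, (n:ℤ)) = p + (0, (n:ℤ)) + (0, 1) := by
        rw [add_assoc, add_assoc]
        exact pt p _ _ _ _ (by ring) (by ring)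
      calc E p 1 * (U E (p + (0, 1)) n * R E (p + (0, 1) + (0, (n:ℤ))) (n + k))
          = U E p (n + 1) * R E (p + (0, (n:ℤ)) + (0, 1)) (n + k) := by
            rw [← h1, h3]; ring
        _ = U E p n * (E (p + (0, (n:ℤ))) 1 * R E (p + (0, (n:ℤ)) + (0, 1)) (n + k)) := by
            rw [h2]; ring
        _ = U E p n * (R E (p + (0, (n:ℤ))) (n + k) * E (p + (0, (n:ℤ)) + (((n+k:ℕ):ℤ), 0)) 1) := by
            rw [rowswap E hE]
        _ = (U E p n * R E (p + (0, (n:ℤ))) (n + k)) * E (p + ((n:ℤ) + (k:ℤ), (n:ℤ))) 1 := by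
            rw [add_assoc]
            rw [show ((0:ℤ), (n:ℤ)) + (((n+k:ℕ):ℤ), 0) = ((n:ℤ) + (k:ℤ), (n:ℤ)) by
              simp [Prod.ext_iff] <;> push_cast <;> omega]
            ring
        _ = (U E p n * R E (p + (0, (n:ℤ))) (n + k)) * E p 1 := by
            rw [hper p 1]
    rw [key, mul_comm]

end ZinvAux

/-- The invariant `Z(n,k)` is independent of the base point. -/
theorem Zinv_basepoint_independent (n k : ℕ) (hn : 4 ≤ n) (hk1 : 1 ≤ k) (hkn : k ≤ n - 1)
    (E : ℤ × ℤ → Fin 2 → ℝ) (hE : PentagramRel E) (hper : PeriodicNK n k E)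
    (p q : ℤ × ℤ) :
    Zinv n k E p = Zinv n k E q := by
  have hn1 : 1 ≤ n := by omega
  have hx : ∀ (m : ℤ) (a : ℤ × ℤ), Zinv n k E (a + (m, 0)) = Zinv n k E a := by
    intro m
    induction m using Int.induction_on with
    | zero => intro a; simp [Prod.mk_zero_zero]
    | succ i ih =>
      intro a
      have : a + ((i : ℤ) + 1, 0) = (a + ((i : ℤ), 0)) + (1, 0) := by
        rw [add_assoc]; exact ZinvAux.pt a _ _ _ _ (by ring) (by ring)
      rw [this, ZinvAux.step1 hn1 hE hper, ih]
    | pred i ih =>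
      intro a
      have h2 := ZinvAux.step1 hn1 hE hper (a + (-(i : ℤ) - 1, 0))
      rw [show a + (-(i : ℤ) - 1, 0) + (1, 0) = a + (-(i : ℤ), 0) from by
        rw [add_assoc]; exact ZinvAux.pt a _ _ _ _ (by ring) (by ring)] at h2
      rw [← h2]; exact ih a
  have hy : ∀ (m : ℤ) (a : ℤ × ℤ), Zinv n k E (a + (0, m)) = Zinv n k E a := by
    intro m
    induction m using Int.induction_on with
    | zero => intro a; simp [Prod.mk_zero_zero]
    | succ i ih =>
      intro a
      have : a + (0, (i : ℤ) + 1) = (a + (0, (i : ℤ))) + (0, 1) := by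
        rw [add_assoc]; exact ZinvAux.pt a _ _ _ _ (by ring) (by ring)
      rw [this, ZinvAux.step2 hn1 hE hper, ih]
    | pred i ih =>
      intro a
      have h2 := ZinvAux.step2 hn1 hE hper (a + (0, -(i : ℤ) - 1))
      rw [show a + (0, -(i : ℤ) - 1) + (0, 1) = a + (0, -(i : ℤ)) from by
        rw [add_assoc]; exact ZinvAux.pt a _ _ _ _ (by ring) (by ring)] at h2
      rw [← h2]; exact ih a
  have : p = q + (p.1 - q.1, 0) + (0, p.2 - q.2) := by
    rw [add_assoc]
    rw [show (p.1 - q.1, (0:ℤ)) + ((0:ℤ), p.2 - q.2) = (p.1 - q.1, p.2 - q.2) by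
      simp [Prod.ext_iff]]
    simp [Prod.ext_iff]
  rw [this, hy, hx]
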